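/- arXiv:1710.07940 — 3 statements merged into one kernel-verified Lean document; each statement's English description precedes it below -/
import Mathlib

section
/- Let γ be a real symplectic 2n×2n matrix and λ an eigenvalue of γ on the unit circle. Then ℂ^{2n} decomposes as the Krein-orthogonal direct sum E_λ ⊕ F_λ, where E_λ is the generalized eigenspace of λ and F_λ is the sum of generalized eigenspaces over all other eigenvalues. -/
open Matrix Complex

noncomputable def JmatR (n : ℕ) : Matrix (Fin n ⊕ Fin n) (Fin n ⊕ Fin n) ℝ :=
  Matrix.fromBlocks 0 1 (-1) 0

noncomputable def Jmat (n : ℕ) : Matrix (Fin n ⊕ Fin n) (Fin n ⊕ Fin n) ℂ :=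
  Matrix.fromBlocks 0 1 (-1) 0

/-- The Krein form `(x,y)_G = i ⟨x, J y⟩`. -/
noncomputable def krein (n : ℕ) (x y : (Fin n ⊕ Fin n) → ℂ) : ℂ :=
  Complex.I * ∑ j, x j * (starRingEnd ℂ) ((Jmat n).mulVec y j)

/-- The generalized eigenspace `E_λ = ker (λI - γ)^{2n}` as a submodule of `ℂ^{2n}`. -/
noncomputable def genEig (n : ℕ) (M : Matrix (Fin n ⊕ Fin n) (Fin n ⊕ Fin n) ℂ)
    (lam : ℂ) : Submodule ℂ ((Fin n ⊕ Fin n) → ℂ) :=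
  LinearMap.ker (Matrix.toLin' ((lam • (1 : Matrix (Fin n ⊕ Fin n) (Fin n ⊕ Fin n) ℂ) - M) ^ (2 * n)))

/-- Core orthogonality lemma: if `M` preserves the bilinear form given by `J` and
`lam * nu ≠ 1`, then generalized eigenvectors of `M` for `lam` and `nu` are orthogonal. -/
lemma ortho_core {m : Type*} [Fintype m] [DecidableEq m]
    (M J : Matrix m m ℂ) (h : Mᵀ * J * M = J)
    (lam nu : ℂ) (hln : lam * nu ≠ 1) (P Q : ℕ)
    (x y : m → ℂ) (hx : ((M - lam • 1) ^ P).mulVec x = 0)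
    (hy : ((M - nu • 1) ^ Q).mulVec y = 0) :
    x ⬝ᵥ J.mulVec y = 0 := by
  set A := M - lam • (1 : Matrix m m ℂ) with hA
  set B := M - nu • (1 : Matrix m m ℂ) with hB
  set c : ℕ → ℕ → ℂ := fun p q => ((A ^ p).mulVec x) ⬝ᵥ J.mulVec ((B ^ q).mulVec y) with hc
  have hinv : ∀ u v : m → ℂ, (M.mulVec u) ⬝ᵥ J.mulVec (M.mulVec v) = u ⬝ᵥ J.mulVec v := by
    intro u v
    rw [Matrix.mulVec_mulVec, Matrix.dotProduct_mulVec, Matrix.dotProduct_mulVec,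
      ← Matrix.vecMul_transpose, Matrix.vecMul_vecMul, ← Matrix.mul_assoc, h]
  have hMu : ∀ (p : ℕ), M.mulVec ((A ^ p).mulVec x)
      = (A ^ (p+1)).mulVec x + lam • (A ^ p).mulVec x := by
    intro p
    have hM : M = A + lam • 1 := by rw [hA]; abel
    nth_rewrite 1 [hM]
    rw [Matrix.add_mulVec, Matrix.smul_mulVec, Matrix.one_mulVec,
      Matrix.mulVec_mulVec, ← pow_succ']
  have hMv : ∀ (q : ℕ), M.mulVec ((B ^ q).mulVec y)
      = (B ^ (q+1)).mulVec y + nu • (B ^ q).mulVec y := by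
    intro q
    have hM : M = B + nu • 1 := by rw [hB]; abel
    nth_rewrite 1 [hM]
    rw [Matrix.add_mulVec, Matrix.smul_mulVec, Matrix.one_mulVec,
      Matrix.mulVec_mulVec, ← pow_succ']
  have hrec : ∀ p q, c p q = c (p+1) (q+1) + nu * c (p+1) q + lam * c p (q+1)
      + lam * nu * c p q := by
    intro p q
    have h1 := hinv ((A ^ p).mulVec x) ((B ^ q).mulVec y)
    rw [hMu p, hMv q, Matrix.mulVec_add, Matrix.mulVec_smul, add_dotProduct,
      dotProduct_add, dotProduct_add, dotProduct_smul,
      dotProduct_smul, smul_dotProduct, smul_dotProduct,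
      smul_eq_mul, smul_eq_mul, smul_eq_mul, smul_eq_mul] at h1
    simp only [hc]
    linear_combination -h1
  have key : ∀ j p q, P + Q ≤ p + q + j → c p q = 0 := by
    intro j
    induction j with
    | zero =>
      intro p q hpq
      have : P ≤ p ∨ Q ≤ q := by omega
      rcases this with hp | hq
      · have hz : (A ^ p).mulVec x = 0 := by
          have : A ^ p = A ^ (p - P) * A ^ P := by rw [← pow_add]; congr 1; omega
          rw [this, ← Matrix.mulVec_mulVec, hx, Matrix.mulVec_zero]
        simp only [hc]
        rw [hz, zero_dotProduct]
      · have hz : (B ^ q).mulVec y = 0 := by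
          have : B ^ q = B ^ (q - Q) * B ^ Q := by rw [← pow_add]; congr 1; omega
          rw [this, ← Matrix.mulVec_mulVec, hy, Matrix.mulVec_zero]
        simp only [hc]
        rw [hz, Matrix.mulVec_zero, dotProduct_zero]
    | succ j ih =>
      intro p q hpq
      have h1 := ih (p+1) q (by omega)
      have h2 := ih p (q+1) (by omega)
      have h3 := ih (p+1) (q+1) (by omega)
      have hr := hrec p q
      rw [h1, h2, h3] at hr
      have h4 : (1 - lam * nu) * c p q = 0 := by linear_combination hr
      rcases mul_eq_zero.mp h4 with h5 | h5
      · exact absurd (sub_eq_zero.mp h5).symm hln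
      · exact h5
  have := key (P + Q) 0 0 (by omega)
  simpa [hc, Matrix.one_mulVec] using this

lemma Jmat_eq_map (n : ℕ) : (JmatR n).map Complex.ofReal = Jmat n := by
  ext i j
  rcases i with i | i <;> rcases j with j | j <;>
    simp [JmatR, Jmat, Matrix.fromBlocks, Matrix.map_apply, Matrix.one_apply,
      apply_ite Complex.ofReal]

lemma map_ofReal_mul {m : Type*} [Fintype m] (A B : Matrix m m ℝ) :
    (A * B).map Complex.ofReal = A.map Complex.ofReal * B.map Complex.ofReal := by
  ext i j
  simp [Matrix.map_apply, Matrix.mul_apply]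

lemma symplC (n : ℕ) (γ : Matrix (Fin n ⊕ Fin n) (Fin n ⊕ Fin n) ℝ)
    (hγ : γᵀ * JmatR n * γ = JmatR n) :
    (γ.map Complex.ofReal)ᵀ * Jmat n * (γ.map Complex.ofReal) = Jmat n := by
  have h2 : ((γᵀ * JmatR n * γ).map Complex.ofReal) = (JmatR n).map Complex.ofReal := by
    rw [hγ]
  rw [map_ofReal_mul, map_ofReal_mul, Jmat_eq_map] at h2
  have h3 : (γᵀ).map Complex.ofReal = (γ.map Complex.ofReal)ᵀ := by
    ext i j
    simp [Matrix.map_apply]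
  rw [h3] at h2
  exact h2

/-- Rewriting the Krein form through entrywise conjugation of `y`. -/
lemma krein_eq_dot (n : ℕ) (x y : (Fin n ⊕ Fin n) → ℂ) :
    krein n x y
      = Complex.I * (x ⬝ᵥ (Jmat n).mulVec (fun j => (starRingEnd ℂ) (y j))) := by
  unfold krein
  congr 1
  rw [dotProduct]
  refine Finset.sum_congr rfl fun j _ => ?_
  congr 1
  simp only [Matrix.mulVec, dotProduct, map_sum, _root_.map_mul]
  refine Finset.sum_congr rfl fun k _ => ?_
  congr 1
  rw [← Jmat_eq_map]
  simp [Matrix.map_apply, Complex.conj_ofReal]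

lemma mem_genEig_iff (n : ℕ) (M : Matrix (Fin n ⊕ Fin n) (Fin n ⊕ Fin n) ℂ) (mu : ℂ)
    (x : (Fin n ⊕ Fin n) → ℂ) :
    x ∈ genEig n M mu ↔ ((M - mu • 1) ^ (2 * n)).mulVec x = 0 := by
  have h1 : mu • (1 : Matrix (Fin n ⊕ Fin n) (Fin n ⊕ Fin n) ℂ) - M = -(M - mu • 1) :=
    (neg_sub _ _).symm
  rw [genEig, LinearMap.mem_ker, Matrix.toLin'_apply, h1, Even.neg_pow (even_two_mul n)]

lemma pow_apply_of_eq {m : Type*} [Fintype m] [DecidableEq m]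
    {g : Module.End ℂ (m → ℂ)} {B : Matrix m m ℂ}
    (h : ∀ v, g v = B.mulVec v) (k : ℕ) (v : m → ℂ) :
    (g ^ k) v = (B ^ k).mulVec v := by
  induction k generalizing v with
  | zero => simp [Matrix.one_mulVec]
  | succ k ih => rw [pow_succ, pow_succ, Module.End.mul_apply, h, ih, Matrix.mulVec_mulVec]

lemma genEig_eq_max (n : ℕ) (M : Matrix (Fin n ⊕ Fin n) (Fin n ⊕ Fin n) ℂ) (mu : ℂ) :
    genEig n M mu
      = Module.End.maxGenEigenspace (Matrix.toLin' M) mu := by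
  set f : Module.End ℂ ((Fin n ⊕ Fin n) → ℂ) := Matrix.toLin' M with hf
  have hg : ∀ v, (f - mu • 1) v = (M - mu • (1 : Matrix (Fin n ⊕ Fin n) (Fin n ⊕ Fin n) ℂ)).mulVec v := by
    intro v
    rw [Matrix.sub_mulVec, Matrix.smul_mulVec, Matrix.one_mulVec]
    simp [hf, Matrix.toLin'_apply]
  have h1 : genEig n M mu = f.genEigenspace mu ((2 * n : ℕ) : ℕ∞) := by
    rw [Module.End.genEigenspace_nat]
    ext x
    rw [mem_genEig_iff, LinearMap.mem_ker, pow_apply_of_eq hg]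
  rw [h1]
  apply le_antisymm (Module.End.genEigenspace_le_maximal f mu (2 * n))
  rw [Module.End.maxGenEigenspace_eq_genEigenspace_finrank]
  apply (f.genEigenspace mu).monotone
  have hfr : Module.finrank ℂ ((Fin n ⊕ Fin n) → ℂ) = n + n := by
    rw [Module.finrank_pi]
    simp
  rw [hfr]
  exact_mod_cast (by omega : n + n ≤ 2 * n)

/-- Conjugating a generalized eigenvector equation. -/
lemma conj_genEig (n : ℕ) (γ : Matrix (Fin n ⊕ Fin n) (Fin n ⊕ Fin n) ℝ) (mu : ℂ)
    (y : (Fin n ⊕ Fin n) → ℂ)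
    (hy : (((γ.map Complex.ofReal) - mu • 1) ^ (2 * n)).mulVec y = 0) :
    (((γ.map Complex.ofReal) - (starRingEnd ℂ) mu • 1) ^ (2 * n)).mulVec
      (fun j => (starRingEnd ℂ) (y j)) = 0 := by
  set M := γ.map Complex.ofReal with hM
  have h1 : (M - mu • 1).map (starRingEnd ℂ) = M - (starRingEnd ℂ) mu • 1 := by
    ext i j
    simp [hM, Matrix.map_apply, Matrix.sub_apply, Matrix.smul_apply, Matrix.one_apply,
      apply_ite (starRingEnd ℂ), Complex.conj_ofReal]
  have hmap : ((M - mu • 1) ^ (2 * n)).map (starRingEnd ℂ)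
      = (M - (starRingEnd ℂ) mu • 1) ^ (2 * n) := by
    have : ((M - mu • 1) ^ (2 * n)).map (starRingEnd ℂ)
        = ((starRingEnd ℂ).mapMatrix (M - mu • 1)) ^ (2 * n) := by
      rw [← map_pow, RingHom.mapMatrix_apply]
    rw [this, RingHom.mapMatrix_apply, h1]
  funext j
  have : (((M - (starRingEnd ℂ) mu • 1) ^ (2 * n)).mulVec
      (fun k => (starRingEnd ℂ) (y k))) j
      = (starRingEnd ℂ) ((((M - mu • 1) ^ (2 * n)).mulVec y) j) := by
    rw [← hmap]
    simp [Matrix.mulVec, dotProduct, Matrix.map_apply, map_sum, _root_.map_mul]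
  rw [this, hy]
  simp

/-- Krein orthogonality of distinct generalized eigenspaces, `lam` on the unit circle. -/
lemma krein_zero_of_ne (n : ℕ) (γ : Matrix (Fin n ⊕ Fin n) (Fin n ⊕ Fin n) ℝ)
    (hγ : γᵀ * JmatR n * γ = JmatR n)
    (lam : ℂ) (hU : ‖lam‖ = 1) (mu : ℂ) (hne : mu ≠ lam)
    (x : (Fin n ⊕ Fin n) → ℂ) (hx : x ∈ genEig n (γ.map Complex.ofReal) lam)
    (y : (Fin n ⊕ Fin n) → ℂ) (hy : y ∈ genEig n (γ.map Complex.ofReal) mu) :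
    krein n x y = 0 := by
  set M := γ.map Complex.ofReal with hM
  rw [mem_genEig_iff] at hx hy
  have hy' := conj_genEig n γ mu y hy
  have hlam0 : lam ≠ 0 := by
    intro h0
    rw [h0] at hU
    simp at hU
  have hln : lam * (starRingEnd ℂ) mu ≠ 1 := by
    intro h1
    have h2 : lam * (starRingEnd ℂ) lam = 1 := by
      rw [Complex.mul_conj]
      norm_cast
      rw [← Complex.sq_norm, hU]
      norm_num
    have := mul_left_cancel₀ hlam0 (h1.trans h2.symm)
    exact hne ((starRingEnd ℂ).injective this)
  have hzero : x ⬝ᵥ (Jmat n).mulVec (fun j => (starRingEnd ℂ) (y j)) = 0 :=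
    ortho_core M (Jmat n) (symplC n γ hγ) lam ((starRingEnd ℂ) mu) hln (2 * n) (2 * n)
      x (fun j => (starRingEnd ℂ) (y j)) hx hy'
  rw [krein_eq_dot, hzero, mul_zero]

/-- For `λ` on the unit circle, `ℂ^{2n} = E_λ ⊕ F_λ` is a Krein-orthogonal decomposition,
where `F_λ` is the sum of the generalized eigenspaces of the other eigenvalues. -/
theorem krein_orthogonal_decomposition (n : ℕ)
    (γ : Matrix (Fin n ⊕ Fin n) (Fin n ⊕ Fin n) ℝ)
    (hγ : γᵀ * JmatR n * γ = JmatR n)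
    (lam : ℂ) (hU : ‖lam‖ = 1)
    (hlam : ∃ v, v ≠ 0 ∧ (γ.map Complex.ofReal).mulVec v = lam • v)
    (F : Submodule ℂ ((Fin n ⊕ Fin n) → ℂ))
    (hF : F = ⨆ mu ∈ {mu : ℂ | mu ≠ lam ∧ ∃ v, v ≠ 0 ∧ (γ.map Complex.ofReal).mulVec v = mu • v},
      genEig n (γ.map Complex.ofReal) mu) :
    genEig n (γ.map Complex.ofReal) lam ⊔ F = ⊤ ∧
    genEig n (γ.map Complex.ofReal) lam ⊓ F = ⊥ ∧
    (∀ x ∈ genEig n (γ.map Complex.ofReal) lam, ∀ y ∈ F, krein n x y = 0) := by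
  set M := γ.map Complex.ofReal with hM
  set f : Module.End ℂ ((Fin n ⊕ Fin n) → ℂ) := Matrix.toLin' M with hf
  set S := {mu : ℂ | mu ≠ lam ∧ ∃ v, v ≠ 0 ∧ M.mulVec v = mu • v} with hS
  -- eigenvalue criterion
  have hev : ∀ mu : ℂ, (∃ v, v ≠ 0 ∧ M.mulVec v = mu • v) ↔ f.HasEigenvalue mu := by
    intro mu
    rw [Module.End.hasEigenvalue_iff, Submodule.ne_bot_iff]
    constructor
    · rintro ⟨v, hv0, hv⟩
      exact ⟨v, Module.End.mem_eigenspace_iff.mpr (by rw [hf, Matrix.toLin'_apply, hv]), hv0⟩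
    · rintro ⟨v, hv, hv0⟩
      exact ⟨v, hv0, by rw [← Matrix.toLin'_apply M v, ← hf, Module.End.mem_eigenspace_iff.mp hv]⟩
  -- F is below the sup of other maximal generalized eigenspaces
  have hFle : F ≤ ⨆ mu ≠ lam, f.maxGenEigenspace mu := by
    rw [hF]
    refine iSup₂_le fun mu hmu => ?_
    rw [genEig_eq_max]
    exact le_iSup₂_of_le mu hmu.1 le_rfl
  constructor
  · -- sup = ⊤
    rw [eq_top_iff, ← Module.End.iSup_maxGenEigenspace_eq_top f]
    refine iSup_le fun mu => ?_
    by_cases hml : mu = lam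
    · rw [hml, ← genEig_eq_max]
      exact le_sup_left
    by_cases hb : f.maxGenEigenspace mu = ⊥
    · rw [hb]; exact bot_le
    · have hevmu : f.HasEigenvalue mu := by
        rw [Module.End.maxGenEigenspace_eq_genEigenspace_finrank] at hb
        exact Module.End.hasEigenvalue_of_hasGenEigenvalue
          (Module.End.hasGenEigenvalue_iff.mpr hb)
      have hmuS : mu ∈ S := ⟨hml, (hev mu).mpr hevmu⟩
      refine le_trans ?_ le_sup_right
      rw [hF, ← genEig_eq_max]
      exact le_iSup₂_of_le mu hmuS le_rfl
  constructor
  · -- inf = ⊥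
    have hind := f.independent_genEigenspace ⊤
    have hdisj := hind lam
    rw [genEig_eq_max]
    exact disjoint_iff.mp (hdisj.mono_right hFle)
  · -- Krein orthogonality
    intro x hx y hyF
    have kadd : ∀ y z, krein n x (y + z) = krein n x y + krein n x z := by
      intro y z
      simp [krein, Matrix.mulVec_add, map_add, mul_add, Finset.sum_add_distrib]
    have kzero : krein n x 0 = 0 := by
      simp [krein, Matrix.mulVec_zero]
    rw [hF] at hyF
    refine Submodule.iSup_induction
      (fun mu => ⨆ _ : mu ∈ S, genEig n M mu) (motive := fun y => krein n x y = 0) hyF ?_ kzero ?_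
    · intro mu z hz
      have hz' : z ∈ ⨆ _ : mu ∈ S, genEig n M mu := hz
      by_cases hmu : mu ∈ S
      · rw [iSup_pos hmu] at hz'
        exact krein_zero_of_ne n γ hγ lam hU mu hmu.1 x hx z hz'
      · rw [iSup_neg hmu] at hz'
        rw [(Submodule.mem_bot ℂ).mp hz', kzero]
    · intro a b ha hb
      rw [kadd, ha, hb, add_zero]
end

section
/- Let γ be a 2n×2n real symplectic matrix with eigenvalue λ = e^{iθ₀} on the unit circle, Jordan chains ξ_{i,j} forming a basis of the generalized eigenspace E_λ, and set η_{i,j} = (-i e^{iθ₀})^j ξ_{i,j}. Then for all i, i' with j_i = j_{i'} (same Jordan block size), the quantity (η_{i, j_i}, η_{i', 1})_G equals the complex conjugate of (η_{i', j_{i'}}, η_{i, 1})_G; i.e., the matrix X restricted to blocks of equal size is Hermitian. -/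
open Matrix Complex

lemma Jmat_conj (n : ℕ) (j k : Fin n ⊕ Fin n) :
    (starRingEnd ℂ) (Jmat n j k) = Jmat n j k := by
  cases j <;> cases k <;> simp [Jmat, Matrix.one_apply]

lemma krein_conj (n : ℕ) (x y : (Fin n ⊕ Fin n) → ℂ) :
    krein n x y = (starRingEnd ℂ) (krein n y x) := by
  have Jmat_antisymm : ∀ j k : Fin n ⊕ Fin n, Jmat n k j = - Jmat n j k := by
    intro j k; cases j <;> cases k <;> simp [Jmat, Matrix.one_apply, eq_comm]
  simp only [krein, Matrix.mulVec, dotProduct, map_sum, Finset.mul_sum]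
  rw [Finset.sum_comm]
  refine Finset.sum_congr rfl fun a _ => Finset.sum_congr rfl fun b _ => ?_
  simp only [_root_.map_mul, Complex.conj_I, Jmat_conj, RingHomCompTriple.comp_apply,
    RingHom.id_apply, Complex.conj_conj]
  rw [Jmat_antisymm a b]
  ring

lemma krein_eq (n : ℕ) (x y : (Fin n ⊕ Fin n) → ℂ) :
    krein n x y = Complex.I * (x ⬝ᵥ ((Jmat n).mulVec fun j => (starRingEnd ℂ) (y j))) := by
  unfold krein dotProduct
  congr 1
  refine Finset.sum_congr rfl fun j _ => ?_
  congr 1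
  simp [Matrix.mulVec, dotProduct, map_sum, _root_.map_mul, Jmat_conj]

lemma JmatR_map (n : ℕ) : (JmatR n).map (Complex.ofReal) = Jmat n := by
  ext j k
  cases j <;> cases k <;> simp [JmatR, Jmat, Matrix.one_apply, apply_ite]

lemma krein_gamma (n : ℕ) (γ : Matrix (Fin n ⊕ Fin n) (Fin n ⊕ Fin n) ℝ)
    (hγ : γᵀ * JmatR n * γ = JmatR n) (x y : (Fin n ⊕ Fin n) → ℂ) :
    krein n ((γ.map Complex.ofReal).mulVec x) ((γ.map Complex.ofReal).mulVec y)
      = krein n x y := by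
  set A := γ.map Complex.ofReal with hAdef
  have hA : Aᵀ * Jmat n * A = Jmat n := by
    calc Aᵀ * Jmat n * A = Aᵀ * (JmatR n).map Complex.ofReal * A := by rw [JmatR_map]
      _ = (γᵀ * JmatR n * γ).map Complex.ofReal := by
          rw [hAdef, ← Matrix.transpose_map]
          rw [show (Complex.ofReal : ℝ → ℂ) = ⇑Complex.ofRealHom from rfl]
          rw [← Matrix.map_mul, ← Matrix.map_mul]
      _ = Jmat n := by rw [hγ, JmatR_map]
  have hstar : (fun j => (starRingEnd ℂ) ((A.mulVec y) j)) = A.mulVec fun j => (starRingEnd ℂ) (y j) := by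
    funext j
    simp [Matrix.mulVec, dotProduct, map_sum, _root_.map_mul, hAdef]
  rw [krein_eq, krein_eq, hstar]
  congr 1
  rw [Matrix.mulVec_mulVec, ← Matrix.vecMul_transpose, Matrix.dotProduct_mulVec,
    Matrix.vecMul_vecMul, ← Matrix.mul_assoc, hA, ← Matrix.dotProduct_mulVec]

lemma krein_zero_left (n : ℕ) (y : (Fin n ⊕ Fin n) → ℂ) : krein n 0 y = 0 := by
  simp [krein]

lemma krein_zero_right (n : ℕ) (x : (Fin n ⊕ Fin n) → ℂ) : krein n x 0 = 0 := by
  simp [krein]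

lemma krein_smul_smul (n : ℕ) (a b : ℂ) (x y : (Fin n ⊕ Fin n) → ℂ) :
    krein n (a • x) (b • y) = a * (starRingEnd ℂ) b * krein n x y := by
  simp only [krein, Matrix.mulVec_smul, Pi.smul_apply, smul_eq_mul, _root_.map_mul,
    Finset.mul_sum]
  refine Finset.sum_congr rfl fun j _ => by ring

lemma krein_expand (n : ℕ) (a b : ℂ) (x x' y y' : (Fin n ⊕ Fin n) → ℂ) :
    krein n (a • x - x') (b • y - y')
      = a * (starRingEnd ℂ) b * krein n x y - a * krein n x y'
        - (starRingEnd ℂ) b * krein n x' y + krein n x' y' := by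
  simp only [krein, Matrix.mulVec_sub, Matrix.mulVec_smul, Pi.sub_apply, Pi.smul_apply,
    smul_eq_mul, map_sub, _root_.map_mul, Finset.mul_sum, ← Finset.sum_sub_distrib,
    ← Finset.sum_add_distrib]
  refine Finset.sum_congr rfl fun j _ => by ring
/-- For Jordan blocks of equal size, `X_{i,i'} = (η_{i,j_i}, η_{i',1})_G` is Hermitian:
`(η_{i,j_i}, η_{i',1})_G = conj (η_{i',j_{i'}}, η_{i,1})_G`. -/
theorem krein_X_hermitian_on_equal_blocks (n m : ℕ)
    (γ : Matrix (Fin n ⊕ Fin n) (Fin n ⊕ Fin n) ℝ)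
    (hγ : γᵀ * JmatR n * γ = JmatR n)
    (θ0 : ℝ)
    (jsz : Fin m → ℕ) (hjsz : ∀ i, 1 ≤ jsz i)
    (ξ η : Fin m → ℕ → (Fin n ⊕ Fin n) → ℂ)
    (hzero : ∀ i, ξ i 0 = 0)
    (hchain : ∀ i : Fin m, ∀ j : ℕ, 1 ≤ j → j ≤ jsz i →
      (γ.map Complex.ofReal).mulVec (ξ i j) = Complex.exp (Complex.I * θ0) • ξ i j - ξ i (j - 1))
    (hli : LinearIndependent ℂ (fun p : Σ i : Fin m, Fin (jsz i) => ξ p.1 ((p.2 : ℕ) + 1)))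
    (hspan : ∀ v : (Fin n ⊕ Fin n) → ℂ,
      ((Complex.exp (Complex.I * θ0) • (1 : Matrix (Fin n ⊕ Fin n) (Fin n ⊕ Fin n) ℂ)
          - γ.map Complex.ofReal) ^ (2 * n)).mulVec v = 0 →
      v ∈ Submodule.span ℂ
        (Set.range fun p : Σ i : Fin m, Fin (jsz i) => ξ p.1 ((p.2 : ℕ) + 1)))
    (hη : ∀ i j, η i j = ((-Complex.I) * Complex.exp (Complex.I * θ0)) ^ j • ξ i j)
    (i i' : Fin m) (heq : jsz i = jsz i') :
    krein n (η i (jsz i)) (η i' 1)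
      = (starRingEnd ℂ) (krein n (η i' (jsz i')) (η i 1)) := by
  set lam := Complex.exp (Complex.I * θ0) with hlamdef
  set s := jsz i with hs
  have hs1 : 1 ≤ s := hjsz i
  have hlam1 : lam * (starRingEnd ℂ) lam = 1 := by
    rw [hlamdef, ← Complex.exp_conj, ← Complex.exp_add]
    have : Complex.I * θ0 + (starRingEnd ℂ) (Complex.I * θ0) = 0 := by
      simp [_root_.map_mul, Complex.conj_I, Complex.conj_ofReal]
    rw [this, Complex.exp_zero]
  -- recurrence for the ξ-pairings
  have Grec : ∀ j k : ℕ, j + 1 ≤ s → k + 1 ≤ s →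
      krein n (ξ i j) (ξ i' k)
        = lam * krein n (ξ i (j+1)) (ξ i' k)
          + (starRingEnd ℂ) lam * krein n (ξ i j) (ξ i' (k+1)) := by
    intro j k hj hk
    have e1 := hchain i (j+1) (by omega) (by omega)
    have e2 := hchain i' (k+1) (by omega) (by omega)
    simp only [Nat.add_sub_cancel] at e1 e2
    have e := krein_gamma n γ hγ (ξ i (j+1)) (ξ i' (k+1))
    rw [e1, e2, krein_expand, hlam1, one_mul] at e
    linear_combination e
  -- converting ξ-pairings to η-pairings
  have hconv : ∀ j k : ℕ, krein n (η i j) (η i' k)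
      = ((-Complex.I) * lam) ^ j * ((starRingEnd ℂ) ((-Complex.I) * lam)) ^ k
        * krein n (ξ i j) (ξ i' k) := by
    intro j k
    rw [hη, hη, krein_smul_smul, ← map_pow]
  have hcmu : (starRingEnd ℂ) ((-Complex.I) * lam) = Complex.I * (starRingEnd ℂ) lam := by
    simp [_root_.map_mul, Complex.conj_I]
  -- recurrence for the η-pairings
  have Hrec : ∀ j k : ℕ, j + 1 ≤ s → k + 1 ≤ s →
      krein n (η i j) (η i' k)
        = Complex.I * krein n (η i (j+1)) (η i' k)
          - Complex.I * krein n (η i j) (η i' (k+1)) := by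
    intro j k hj hk
    rw [hconv j k, hconv (j+1) k, hconv j (k+1), Grec j k hj hk, hcmu, pow_succ, pow_succ]
    linear_combination ((-Complex.I * lam) ^ j * (Complex.I * (starRingEnd ℂ) lam) ^ k
      * (lam * krein n (ξ i (j+1)) (ξ i' k)
        + (starRingEnd ℂ) lam * krein n (ξ i j) (ξ i' (k+1)))) * Complex.I_mul_I
  have hη0 : ∀ a, η a 0 = 0 := by
    intro a; rw [hη, hzero]; simp
  -- vanishing below the antidiagonal
  have hlow : ∀ k j : ℕ, j + k ≤ s → krein n (η i j) (η i' k) = 0 := by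
    intro k
    induction k with
    | zero => intro j _; rw [hη0 i']; exact krein_zero_right n _
    | succ k ih =>
      intro j hjk
      have h1 := Hrec j k (by omega) (by omega)
      rw [ih j (by omega), ih (j+1) (by omega)] at h1
      have h2 : Complex.I * krein n (η i j) (η i' (k+1)) = 0 := by linear_combination h1
      rcases mul_eq_zero.mp h2 with h | h
      · exact absurd h Complex.I_ne_zero
      · exact h
  -- constancy along the antidiagonal j + k = s + 1
  have hdiag : ∀ t : ℕ, t ≤ s - 1 →
      krein n (η i (s - t)) (η i' (t + 1)) = krein n (η i s) (η i' 1) := by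
    intro t
    induction t with
    | zero => intro _; simp
    | succ t ih =>
      intro ht
      have h0 : krein n (η i (s - (t+1))) (η i' (t+1)) = 0 := hlow (t+1) (s-(t+1)) (by omega)
      have h1 := Hrec (s - (t+1)) (t+1) (by omega) (by omega)
      rw [h0] at h1
      have h2 : Complex.I * (krein n (η i (s - (t+1) + 1)) (η i' (t+1))
          - krein n (η i (s - (t+1))) (η i' (t+1+1))) = 0 := by linear_combination -h1
      have hstep : krein n (η i (s - (t+1) + 1)) (η i' (t+1))
          = krein n (η i (s - (t+1))) (η i' (t+1+1)) := by
        rcases mul_eq_zero.mp h2 with h | h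
        · exact absurd h Complex.I_ne_zero
        · exact sub_eq_zero.mp h
      have e1 : s - (t+1) + 1 = s - t := by omega
      rw [e1] at hstep
      rw [← hstep]
      exact ih (by omega)
  rw [← krein_conj, ← heq]
  have hfin := hdiag (s - 1) (le_refl _)
  have e1 : s - (s - 1) = 1 := by omega
  have e2 : s - 1 + 1 = s := by omega
  rw [e1, e2] at hfin
  exact hfin.symm
end

section
/- Let γ(t, ε) solve the ODE ∂γ/∂t = J A(t, ε) γ with γ(0, ε) = Id, where A(t, ε) is symmetric, continuous in t, and continuously differentiable in ε. Define C(t, ε) = -γ(t,ε)ᵀ J ∂γ/∂ε(t,ε). Then C(t,ε) = ∫₀ᵗ γ(u,ε)ᵀ (∂A/∂ε)(u,ε) γ(u,ε) du; in particular C(t,ε) is a symmetric matrix. -/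
open Matrix

lemma JmatR_transpose (n : ℕ) : (JmatR n)ᵀ = -JmatR n := by
  simp [JmatR, Matrix.fromBlocks_transpose, Matrix.fromBlocks_neg]

lemma JmatR_sq (n : ℕ) : JmatR n * JmatR n = -1 := by
  rw [show (-1 : Matrix (Fin n ⊕ Fin n) (Fin n ⊕ Fin n) ℝ) = -(Matrix.fromBlocks 1 0 0 1) by
    rw [Matrix.fromBlocks_one], Matrix.fromBlocks_neg]
  simp [JmatR, Matrix.fromBlocks_multiply]

lemma JmatR_sq' (n : ℕ) (M : Matrix (Fin n ⊕ Fin n) (Fin n ⊕ Fin n) ℝ) :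
    JmatR n * (JmatR n * M) = -M := by
  rw [← Matrix.mul_assoc, JmatR_sq]; simp

lemma key_alg (n : ℕ) (B E G D : Matrix (Fin n ⊕ Fin n) (Fin n ⊕ Fin n) ℝ)
    (hB : Bᵀ = B) :
    -(((JmatR n * B * G)ᵀ * JmatR n + Gᵀ * 0) * D
      + (Gᵀ * JmatR n) * (JmatR n * E * G + JmatR n * B * D))
    = Gᵀ * E * G := by
  simp only [Matrix.transpose_mul, JmatR_transpose, hB, Matrix.mul_zero, add_zero, Matrix.zero_mul,
    Matrix.mul_neg, Matrix.neg_mul, Matrix.mul_add, Matrix.add_mul,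
    Matrix.mul_assoc, JmatR_sq', Matrix.mul_one]
  abel

variable {m : Type*} [Fintype m]

lemma hasDerivAt_mulEntry {M N : ℝ → Matrix m m ℝ} {M' N' : Matrix m m ℝ} {t : ℝ}
    (hM : ∀ i j, HasDerivAt (fun s => M s i j) (M' i j) t)
    (hN : ∀ i j, HasDerivAt (fun s => N s i j) (N' i j) t)
    (i j : m) :
    HasDerivAt (fun s => (M s * N s) i j) ((M' * N t + M t * N') i j) t := by
  simp only [Matrix.mul_apply, Matrix.add_apply]
  rw [← Finset.sum_add_distrib]
  exact HasDerivAt.fun_sum fun k _ => (hM i k).mul (hN k j)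

lemma continuous_mulEntry {M N : ℝ → Matrix m m ℝ}
    (hM : ∀ i j, Continuous fun s => M s i j)
    (hN : ∀ i j, Continuous fun s => N s i j) (i j : m) :
    Continuous fun s => (M s * N s) i j := by
  simp only [Matrix.mul_apply]
  exact continuous_finset_sum _ fun k _ => (hM i k).mul (hN k j)

/-- Alternative expression for `C(t,ε) = -γ(t,ε)ᵀ J ∂γ/∂ε(t,ε)`:
`C(t,ε) = ∫₀ᵗ γ(u,ε)ᵀ (∂A/∂ε)(u,ε) γ(u,ε) du`; in particular `C(t,ε)` is symmetric. -/
theorem C_integral_expression (n : ℕ)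
    (A γ δA δγ : ℝ → ℝ → Matrix (Fin n ⊕ Fin n) (Fin n ⊕ Fin n) ℝ)
    (hAsymm : ∀ t ε, (A t ε)ᵀ = A t ε)
    (hAcont : ∀ ε i j, Continuous fun t => A t ε i j)
    (hδAcont : ∀ ε i j, Continuous fun t => δA t ε i j)
    (hγ0 : ∀ ε, γ 0 ε = 1)
    (hODE : ∀ t ε i j, HasDerivAt (fun s => γ s ε i j) ((JmatR n * A t ε * γ t ε) i j) t)
    (hdε : ∀ t ε i j, HasDerivAt (fun e => γ t e i j) (δγ t ε i j) ε)
    (hdAε : ∀ t ε i j, HasDerivAt (fun e => A t e i j) (δA t ε i j) ε)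
    (hmixed : ∀ t ε i j, HasDerivAt (fun s => δγ s ε i j)
      ((JmatR n * δA t ε * γ t ε + JmatR n * A t ε * δγ t ε) i j) t)
    (t ε : ℝ) :
    (∀ i j, (-((γ t ε)ᵀ * JmatR n * δγ t ε)) i j
        = ∫ u in (0 : ℝ)..t, ((γ u ε)ᵀ * δA u ε * γ u ε) i j) ∧
    (-((γ t ε)ᵀ * JmatR n * δγ t ε))ᵀ = -((γ t ε)ᵀ * JmatR n * δγ t ε) := by
  -- continuity of γ entries in time
  have hγcont : ∀ i j, Continuous fun s => γ s ε i j := fun i j =>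
    continuous_iff_continuousAt.2 fun x => (hODE x ε i j).continuousAt
  have hγTcont : ∀ i j, Continuous fun s => (γ s ε)ᵀ i j := fun i j => hγcont j i
  -- δγ vanishes at time 0
  have hδγ0 : δγ 0 ε = 0 := by
    ext i j
    have h2 : HasDerivAt (fun e => γ 0 e i j) 0 ε := by
      have : (fun e => γ 0 e i j) = fun _ => (1 : Matrix (Fin n ⊕ Fin n) (Fin n ⊕ Fin n) ℝ) i j := by
        funext e; rw [hγ0]
      rw [this]; exact hasDerivAt_const _ _
    simpa using (hdε 0 ε i j).unique h2
  -- derivative of F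
  have hF : ∀ s i j, HasDerivAt (fun u => (-((γ u ε)ᵀ * JmatR n * δγ u ε)) i j)
      (((γ s ε)ᵀ * δA s ε * γ s ε) i j) s := by
    intro s i j
    have hT : ∀ i j, HasDerivAt (fun u => (γ u ε)ᵀ i j)
        ((JmatR n * A s ε * γ s ε)ᵀ i j) s := fun i j => hODE s ε j i
    have hP : ∀ i j : Fin n ⊕ Fin n, HasDerivAt (fun u => ((γ u ε)ᵀ * JmatR n) i j)
        ((((JmatR n * A s ε * γ s ε)ᵀ * JmatR n + (γ s ε)ᵀ * 0 : Matrix (Fin n ⊕ Fin n) (Fin n ⊕ Fin n) ℝ)) i j) s :=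
      hasDerivAt_mulEntry hT (fun i j => hasDerivAt_const _ _)
    have hfull := hasDerivAt_mulEntry (M := fun u => (γ u ε)ᵀ * JmatR n)
      (N := fun u => δγ u ε) hP (fun i j => hmixed s ε i j) i j
    have hkey := key_alg n (A s ε) (δA s ε) (γ s ε) (δγ s ε) (hAsymm s ε)
    have h2 := hfull.neg
    rw [← Matrix.neg_apply, hkey] at h2
    exact h2
  -- integrability of integrand
  have hGint : ∀ i j, IntervalIntegrable (fun u => ((γ u ε)ᵀ * δA u ε * γ u ε) i j)
      MeasureTheory.volume 0 t := by
    intro i j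
    exact (continuous_mulEntry (continuous_mulEntry hγTcont (hδAcont ε)) hγcont i j).intervalIntegrable _ _
  have h1 : ∀ i j, (-((γ t ε)ᵀ * JmatR n * δγ t ε)) i j
      = ∫ u in (0:ℝ)..t, ((γ u ε)ᵀ * δA u ε * γ u ε) i j := by
    intro i j
    have := intervalIntegral.integral_eq_sub_of_hasDerivAt
      (f := fun u => (-((γ u ε)ᵀ * JmatR n * δγ u ε)) i j)
      (f' := fun u => ((γ u ε)ᵀ * δA u ε * γ u ε) i j)
      (fun x _ => hF x i j) (hGint i j)
    rw [this]
    simp [hδγ0]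
  refine ⟨h1, ?_⟩
  -- δA is symmetric
  have hδAsymm : ∀ u, (δA u ε)ᵀ = δA u ε := by
    intro u; ext i j
    show δA u ε j i = δA u ε i j
    have h2 : HasDerivAt (fun e => A u e j i) (δA u ε i j) ε := by
      have heq : (fun e => A u e j i) = fun e => A u e i j := by
        funext e
        conv_lhs => rw [← hAsymm u e]
        rfl
      rw [heq]; exact hdAε u ε i j
    exact (hdAε u ε j i).unique h2
  have hGsymm : ∀ u, ((γ u ε)ᵀ * δA u ε * γ u ε)ᵀ = (γ u ε)ᵀ * δA u ε * γ u ε := by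
    intro u
    rw [Matrix.transpose_mul, Matrix.transpose_mul, Matrix.transpose_transpose, hδAsymm,
      Matrix.mul_assoc]
  ext i j
  rw [Matrix.transpose_apply, h1 j i, h1 i j]
  congr 1
  funext u
  conv_lhs => rw [← hGsymm u]
  rfl
end
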